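/- For any finite set B of positive integers, there exists a finite hypergraph H = (X, F) such that Maker, moving first, wins the (b:b) Maker-Breaker game on H if and only if b is not in B. -/

import Mathlib

/-- The `(m:b)` Maker-Breaker game on the hypergraph with winning sets `F`.
`mbWin m b F t M B` means: with Maker to move, Maker already owning the
elements of `M` and Breaker those of `B`, Maker has a strategy to claim all
elements of some winning set within at most `t` further Maker moves (rounds).
In each round Maker claims up to `m` unclaimed elements, then Breaker claims
up to `b` unclaimed elements. -/
def mbWin (m b : ℕ) {X : Type} (F : Set (Set X)) : ℕ → Set X → Set X → Prop
  | 0, M, _ => ∃ e ∈ F, e ⊆ M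
  | (t+1), M, B => (∃ e ∈ F, e ⊆ M) ∨
      ∃ S : Set X, S.Finite ∧ S.ncard ≤ m ∧ Disjoint S (M ∪ B) ∧
        ∀ T : Set X, T.Finite → T.ncard ≤ b → Disjoint T (M ∪ B ∪ S) →
          mbWin m b F t (M ∪ S) (B ∪ T)

lemma mbWin_zero (m b : ℕ) {X : Type} (F : Set (Set X)) (M B : Set X) :
    mbWin m b F 0 M B ↔ ∃ e ∈ F, e ⊆ M := Iff.rfl

lemma mbWin_succ (m b : ℕ) {X : Type} (F : Set (Set X)) (t : ℕ) (M B : Set X) :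
    mbWin m b F (t+1) M B ↔ (∃ e ∈ F, e ⊆ M) ∨
      ∃ S : Set X, S.Finite ∧ S.ncard ≤ m ∧ Disjoint S (M ∪ B) ∧
        ∀ T : Set X, T.Finite → T.ncard ≤ b → Disjoint T (M ∪ B ∪ S) →
          mbWin m b F t (M ∪ S) (B ∪ T) := Iff.rfl

namespace MB
noncomputable section
open Finset

abbrev X (m : ℕ) := Fin (m*m+1)

def ctr (m : ℕ) : X m := ⟨0, Nat.succ_pos _⟩

def vv (m j i : ℕ) : X m :=
  if h : j < m ∧ i < m then
    ⟨1 + j*m + i, by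
      have h1 : j + 1 ≤ m := h.1
      have : (j+1) * m ≤ m * m := Nat.mul_le_mul_right m h1
      have h2 : i < m := h.2
      nlinarith⟩
  else ⟨0, Nat.succ_pos _⟩

lemma vv_val (m j i : ℕ) (hj : j < m) (hi : i < m) : (vv m j i : ℕ) = 1 + j*m + i := by
  simp [vv, dif_pos (⟨hj, hi⟩ : j < m ∧ i < m)]

lemma vv_ne_ctr (m j i : ℕ) (hj : j < m) (hi : i < m) : vv m j i ≠ ctr m := by
  intro h
  have := congrArg (fun x : X m => (x : ℕ)) h
  simp [vv_val m j i hj hi, ctr] at this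

lemma vv_inj (m j i j' i' : ℕ) (hj : j < m) (hi : i < m) (hj' : j' < m) (hi' : i' < m)
    (h : vv m j i = vv m j' i') : j = j' ∧ i = i' := by
  have hval : 1 + j*m + i = 1 + j'*m + i' := by
    have := congrArg (fun x : X m => (x : ℕ)) h
    simpa [vv_val m j i hj hi, vv_val m j' i' hj' hi'] using this
  have hjj : j = j' := by
    rcases lt_trichotomy j j' with hlt | heq | hgt
    · exfalso
      have : (j+1) * m ≤ j' * m := Nat.mul_le_mul_right m hlt
      nlinarith
    · exact heq
    · exfalso
      have : (j'+1) * m ≤ j * m := Nat.mul_le_mul_right m hgt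
      nlinarith
  subst hjj
  exact ⟨rfl, by omega⟩

/-- Block `j`: the vertices `vv m j i`, `i < s j`. -/
def Blk (m : ℕ) (s : ℕ → ℕ) (j : ℕ) : Finset (X m) := (Finset.range (s j)).image (vv m j)

/-- The winning sets: the center plus one vertex from each block. -/
def Fam (m : ℕ) (s : ℕ → ℕ) : Set (Set (X m)) :=
  {e | ∃ f : ℕ → ℕ, (∀ j, j < m → f j < s j) ∧
    e = {x | x = ctr m ∨ ∃ j, j < m ∧ x = vv m j (f j)}}

lemma mem_Blk {m : ℕ} {s : ℕ → ℕ} {j : ℕ} {x : X m} :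
    x ∈ Blk m s j ↔ ∃ i, i < s j ∧ vv m j i = x := by
  simp [Blk]

lemma card_Blk {m : ℕ} {s : ℕ → ℕ} {j : ℕ} (hj : j < m) (hsj : s j ≤ m) :
    (Blk m s j).card = s j := by
  rw [Blk, Finset.card_image_of_injOn, Finset.card_range]
  intro i hi i' hi' h
  exact (vv_inj m j i j i' hj (lt_of_lt_of_le (Finset.mem_range.mp hi) hsj)
    hj (lt_of_lt_of_le (Finset.mem_range.mp hi') hsj) h).2

lemma blk_disjoint {m : ℕ} {s : ℕ → ℕ} {j j' : ℕ} (hj : j < m) (hj' : j' < m)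
    (hsj : s j ≤ m) (hsj' : s j' ≤ m) (hne : j ≠ j') {x : X m}
    (h1 : x ∈ Blk m s j) (h2 : x ∈ Blk m s j') : False := by
  obtain ⟨i, hi, rfl⟩ := mem_Blk.mp h1
  obtain ⟨i', hi', he⟩ := mem_Blk.mp h2
  exact hne ((vv_inj m j' i' j i hj' (lt_of_lt_of_le hi' hsj') hj (lt_of_lt_of_le hi hsj) he).1).symm

lemma ctr_not_mem_Blk {m : ℕ} {s : ℕ → ℕ} {j : ℕ} (hj : j < m) (hsj : s j ≤ m) :
    ctr m ∉ Blk m s j := by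
  intro h
  obtain ⟨i, hi, he⟩ := mem_Blk.mp h
  exact vv_ne_ctr m j i hj (lt_of_lt_of_le hi hsj) he

lemma ctr_mem_edge {m : ℕ} {s : ℕ → ℕ} {e : Set (X m)} (he : e ∈ Fam m s) : ctr m ∈ e := by
  obtain ⟨f, hf, rfl⟩ := he
  exact Or.inl rfl

lemma edge_meets_Blk {m : ℕ} {s : ℕ → ℕ} {j : ℕ} (hj : j < m) {e : Set (X m)}
    (he : e ∈ Fam m s) : (e ∩ ↑(Blk m s j)).Nonempty := by
  obtain ⟨f, hf, rfl⟩ := he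
  exact ⟨vv m j (f j), Or.inr ⟨j, hj, rfl⟩, by
    simpa using mem_Blk.mpr ⟨f j, hf j hj, rfl⟩⟩

lemma dead {Y : Type} {F : Set (Set Y)} {D : Set Y}
    (hD : ∀ e ∈ F, (e ∩ D).Nonempty) (m b : ℕ) :
    ∀ t (M B : Set Y), D ⊆ B → M ∩ D = ∅ → ¬ mbWin m b F t M B := by
  intro t
  induction t with
  | zero =>
    rintro M B hDB hMD ⟨e, he, hsub⟩
    obtain ⟨x, hxe, hxD⟩ := hD e he
    have : x ∈ M ∩ D := ⟨hsub hxe, hxD⟩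
    simp [hMD] at this
  | succ t ih =>
    rintro M B hDB hMD (⟨e, he, hsub⟩ | ⟨S, hSfin, hScard, hSdis, hall⟩)
    · obtain ⟨x, hxe, hxD⟩ := hD e he
      have : x ∈ M ∩ D := ⟨hsub hxe, hxD⟩
      simp [hMD] at this
    · have h0 := hall ∅ Set.finite_empty (by simp) (by simp)
      rw [Set.union_empty] at h0
      refine ih (M ∪ S) B hDB ?_ h0
      rw [Set.union_inter_distrib_right, hMD, Set.empty_union]
      apply Set.eq_empty_of_forall_notMem
      rintro x ⟨hxS, hxD⟩
      exact Set.disjoint_left.mp hSdis hxS (Set.mem_union_right _ (hDB hxD))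

/-- Breaker wins when at least `b` blocks have size at most `b`. -/
lemma breaker (m : ℕ) (s : ℕ → ℕ) (hs2 : ∀ j, j < m → s j ≤ m) (b : ℕ) (hb : 0 < b)
    (hN : b ≤ ((Finset.range m).filter (fun j => s j ≤ b)).card) :
    ∀ t, ¬ mbWin b b (Fam m s) t ∅ ∅ := by
  intro t
  match t with
  | 0 =>
    rintro ⟨e, he, hsub⟩
    exact (hsub (ctr_mem_edge he))
  | (t+1) =>
    rintro (⟨e, he, hsub⟩ | ⟨S, hSfin, hScard, hSdis, hall⟩)
    · exact (hsub (ctr_mem_edge he))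
    · by_cases hc : ctr m ∈ S
      · -- Maker took the center plus at most b-1 others; kill an untouched small block
        classical
        set CS : Finset ℕ := (Finset.range m).filter
          (fun j => ((↑(Blk m s j) : Set (X m)) ∩ S).Nonempty) with hCS
        have hw : ∀ j ∈ CS, ∃ x, x ∈ (↑(Blk m s j) : Set (X m)) ∩ S := by
          intro j hj
          exact (Finset.mem_filter.mp hj).2
        -- CS.card ≤ ncard (S \ {ctr}) ≤ b - 1
        have hCScard : CS.card ≤ (S \ {ctr m}).ncard := by
          have hfin : (S \ {ctr m}).Finite := hSfin.diff
          rw [Set.ncard_eq_toFinset_card _ hfin]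
          refine Finset.card_le_card_of_injOn
            (fun j => if h : ∃ x, x ∈ (↑(Blk m s j) : Set (X m)) ∩ S then h.choose else ctr m)
            ?_ ?_
          · intro j hj
            have hex := hw j hj
            have hjm : j < m := Finset.mem_range.mp (Finset.mem_filter.mp hj).1
            simp only [dif_pos hex]
            have hspec := hex.choose_spec
            have hblk : hex.choose ∈ Blk m s j := by
              simpa using hspec.1
            have : hex.choose ≠ ctr m := by
              intro h
              rw [h] at hblk
              exact ctr_not_mem_Blk hjm (hs2 j hjm) hblk
            rw [Finset.mem_coe, Set.Finite.mem_toFinset]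
            exact ⟨hspec.2, by simpa using this⟩
          · intro j hj j' hj' heq
            have hex := hw j hj
            have hex' := hw j' hj'
            simp only [dif_pos hex, dif_pos hex'] at heq
            by_contra hne
            have hjm : j < m := Finset.mem_range.mp (Finset.mem_filter.mp hj).1
            have hjm' : j' < m := Finset.mem_range.mp (Finset.mem_filter.mp hj').1
            have h1 : hex.choose ∈ Blk m s j := by simpa using hex.choose_spec.1
            have h2 : hex'.choose ∈ Blk m s j' := by simpa using hex'.choose_spec.1
            rw [heq] at h1
            exact blk_disjoint hjm hjm' (hs2 j hjm) (hs2 j' hjm') hne h1 h2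
        have hdiff : (S \ {ctr m}).ncard ≤ b - 1 := by
          have := Set.ncard_diff_singleton_add_one hc hSfin
          omega
        -- find a small block untouched by S
        have hnotsub : ¬ ((Finset.range m).filter (fun j => s j ≤ b)) ⊆ CS := by
          intro hsub2
          have := Finset.card_le_card hsub2
          omega
        obtain ⟨j0, hj0mem, hj0CS⟩ := Finset.not_subset.mp hnotsub
        have hj0m : j0 < m := Finset.mem_range.mp (Finset.mem_filter.mp hj0mem).1
        have hj0s : s j0 ≤ b := (Finset.mem_filter.mp hj0mem).2
        have hS0 : ((↑(Blk m s j0) : Set (X m)) ∩ S) = ∅ := by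
          by_contra h
          exact hj0CS (Finset.mem_filter.mpr ⟨Finset.mem_range.mpr hj0m,
            Set.nonempty_iff_ne_empty.mpr h⟩)
        have h0 := hall (↑(Blk m s j0)) (Finset.finite_toSet _)
          (by rw [Set.ncard_coe_finset, card_Blk hj0m (hs2 j0 hj0m)]; exact hj0s)
          (by
            simp only [Set.empty_union, Set.union_empty]
            rw [Set.disjoint_left]
            intro x hx hxS
            have : x ∈ ((↑(Blk m s j0) : Set (X m)) ∩ S) := ⟨hx, hxS⟩
            simp [hS0] at this)
        rw [Set.empty_union, Set.empty_union] at h0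
        refine dead (D := (↑(Blk m s j0) : Set (X m)))
          (fun e he => ?_) b b t S (↑(Blk m s j0)) subset_rfl ?_ h0
        · obtain ⟨x, hx1, hx2⟩ := edge_meets_Blk hj0m he
          exact ⟨x, hx1, hx2⟩
        · rw [Set.inter_comm]
          exact hS0
      · -- Maker skipped the center: Breaker takes it
        have h0 := hall {ctr m} (Set.finite_singleton _) (by rw [Set.ncard_singleton]; exact hb)
          (by simp [Set.disjoint_left, hc])
        rw [Set.empty_union, Set.empty_union] at h0
        refine dead (D := {ctr m}) (fun e he => ⟨ctr m, ctr_mem_edge he, rfl⟩)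
          b b t S {ctr m} subset_rfl ?_ h0
        apply Set.eq_empty_of_forall_notMem
        rintro x ⟨hxS, hxc⟩
        simp only [Set.mem_singleton_iff] at hxc
        subst hxc
        exact hc hxS

/-- Blocks not yet covered by Maker. -/
def uncov (m : ℕ) (s : ℕ → ℕ) (M : Set (X m)) : Finset ℕ :=
  @Finset.filter _ (fun j => ((↑(Blk m s j) : Set (X m)) ∩ M) = ∅) (Classical.decPred _)
    (Finset.range m)

/-- Maker's invariant at her turn. -/
def Inv (m : ℕ) (s : ℕ → ℕ) (b : ℕ) (M Bs : Set (X m)) : Prop :=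
  ctr m ∈ M ∧
  (∀ j ∈ uncov m s M, b + 1 ≤ s j ∧ ((↑(Blk m s j) : Set (X m)) ∩ Bs).ncard ≤ b) ∧
  (@Finset.filter _ (fun j => ((↑(Blk m s j) : Set (X m)) ∩ Bs).Nonempty)
    (Classical.decPred _) (uncov m s M)).card ≤ b

lemma uncov_subset (m : ℕ) (s : ℕ → ℕ) (M : Set (X m)) :
    uncov m s M ⊆ Finset.range m :=
  @Finset.filter_subset ℕ _ (Classical.decPred _) (Finset.range m)

lemma touch_card {m : ℕ} {s : ℕ → ℕ} (hs2 : ∀ j, j < m → s j ≤ m)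
    (W : Finset ℕ) (hW : W ⊆ Finset.range m) (T : Set (X m)) (hT : T.Finite) :
    (@Finset.filter _ (fun j => ((↑(Blk m s j) : Set (X m)) ∩ T).Nonempty)
      (Classical.decPred _) W).card ≤ T.ncard := by
  classical
  rw [Set.ncard_eq_toFinset_card _ hT]
  refine Finset.card_le_card_of_injOn
    (fun j => if h : ∃ x, x ∈ (↑(Blk m s j) : Set (X m)) ∩ T then h.choose else ctr m)
    ?_ ?_
  · intro j hj
    have hex : ∃ x, x ∈ (↑(Blk m s j) : Set (X m)) ∩ T := (Finset.mem_filter.mp hj).2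
    simp only [dif_pos hex]
    rw [Finset.mem_coe, Set.Finite.mem_toFinset]
    exact hex.choose_spec.2
  · intro j hj j' hj' heq
    have hex : ∃ x, x ∈ (↑(Blk m s j) : Set (X m)) ∩ T := (Finset.mem_filter.mp hj).2
    have hex' : ∃ x, x ∈ (↑(Blk m s j') : Set (X m)) ∩ T := (Finset.mem_filter.mp hj').2
    simp only [dif_pos hex, dif_pos hex'] at heq
    by_contra hne
    have hjm : j < m := Finset.mem_range.mp (hW (Finset.mem_filter.mp hj).1)
    have hjm' : j' < m := Finset.mem_range.mp (hW (Finset.mem_filter.mp hj').1)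
    have h1 : hex.choose ∈ Blk m s j := by simpa using hex.choose_spec.1
    have h2 : hex'.choose ∈ Blk m s j' := by simpa using hex'.choose_spec.1
    rw [heq] at h1
    exact blk_disjoint hjm hjm' (hs2 j hjm) (hs2 j' hjm') hne h1 h2

lemma blk_free {m : ℕ} {s : ℕ → ℕ} {b j : ℕ} (hj : j < m) (hsj : s j ≤ m)
    {M Bs : Set (X m)} (hM : (↑(Blk m s j) : Set (X m)) ∩ M = ∅)
    (hbig : b + 1 ≤ s j) (hBs : ((↑(Blk m s j) : Set (X m)) ∩ Bs).ncard ≤ b) :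
    ∃ x, x ∈ Blk m s j ∧ x ∉ M ∧ x ∉ Bs := by
  by_contra h
  push_neg at h
  have hsub : (↑(Blk m s j) : Set (X m)) ⊆ Bs := by
    intro x hx
    have hxB : x ∈ Blk m s j := hx
    by_cases hxM : x ∈ M
    · exact absurd (Set.eq_empty_iff_forall_notMem.mp hM x ⟨hx, hxM⟩) not_false
    · exact h x hxB hxM
  have : ((↑(Blk m s j) : Set (X m)) ∩ Bs) = ↑(Blk m s j) := by
    rw [Set.inter_eq_left]; exact hsub
  rw [this, Set.ncard_coe_finset, card_Blk hj hsj] at hBs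
  omega

lemma covered_win {m : ℕ} {s : ℕ → ℕ} {M : Set (X m)} (hctr : ctr m ∈ M)
    (h : uncov m s M = ∅) : ∃ e ∈ Fam m s, e ⊆ M := by
  classical
  have hch : ∀ j, ∃ i, j < m → (i < s j ∧ vv m j i ∈ M) := by
    intro j
    by_cases hj : j < m
    · have : j ∉ uncov m s M := by rw [h]; exact Finset.notMem_empty _
      rw [uncov, Finset.mem_filter] at this
      push_neg at this
      have hne := this (Finset.mem_range.mpr hj)
      obtain ⟨x, xb, xM⟩ := hne
      obtain ⟨i, hi, rfl⟩ := mem_Blk.mp xb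
      exact ⟨i, fun _ => ⟨hi, xM⟩⟩
    · exact ⟨0, fun h' => absurd h' hj⟩
  choose f hf using hch
  refine ⟨{x | x = ctr m ∨ ∃ j, j < m ∧ x = vv m j (f j)},
    ⟨f, fun j hj => (hf j hj).1, rfl⟩, ?_⟩
  rintro x (rfl | ⟨j, hj, rfl⟩)
  · exact hctr
  · exact (hf j hj).2

lemma mem_uncov {m : ℕ} {s : ℕ → ℕ} {M : Set (X m)} {j : ℕ} :
    j ∈ uncov m s M ↔ j < m ∧ (↑(Blk m s j) : Set (X m)) ∩ M = ∅ := by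
  simp only [uncov, Finset.mem_filter, Finset.mem_range]

lemma maker_step {m : ℕ} {s : ℕ → ℕ} (hs1 : ∀ j, j < m → 0 < s j)
    (hs2 : ∀ j, j < m → s j ≤ m) {b : ℕ} (hb : 0 < b) :
    ∀ t (M Bs : Set (X m)), Inv m s b M Bs → (uncov m s M).card ≤ t →
      mbWin b b (Fam m s) t M Bs := by
  intro t
  induction t with
  | zero =>
    intro M Bs hInv hU
    have h0 : uncov m s M = ∅ := Finset.card_eq_zero.mp (Nat.le_zero.mp hU)
    rw [mbWin_zero]
    exact covered_win hInv.1 h0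
  | succ t ih =>
    intro M Bs hInv hU
    rw [mbWin_succ]
    by_cases hU0 : uncov m s M = ∅
    · exact Or.inl (covered_win hInv.1 hU0)
    · right
      classical
      obtain ⟨hctr, hc1, hc2⟩ := hInv
      set A := @Finset.filter _ (fun j => ((↑(Blk m s j) : Set (X m)) ∩ Bs).Nonempty)
        (Classical.decPred _) (uncov m s M) with hA
      have hAsub : A ⊆ uncov m s M := Finset.filter_subset _ _
      have hAcard : A.card ≤ min b (uncov m s M).card :=
        le_min hc2 (Finset.card_le_card hAsub)
      obtain ⟨Tgt, hT1, hT2, hT3⟩ :=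
        Finset.exists_subsuperset_card_eq hAsub hAcard (min_le_right _ _)
      have hTgt_range : ∀ j ∈ Tgt, j < m := fun j hj =>
        Finset.mem_range.mp (uncov_subset _ _ _ (hT2 hj))
      have hfree : ∀ j ∈ Tgt, ∃ x, x ∈ Blk m s j ∧ x ∉ M ∧ x ∉ Bs := by
        intro j hj
        have hjU : j ∈ uncov m s M := hT2 hj
        have hjm : j < m := hTgt_range j hj
        have hjM : (↑(Blk m s j) : Set (X m)) ∩ M = ∅ := (mem_uncov.mp hjU).2
        obtain ⟨hbig, hBscard⟩ := hc1 j hjU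
        exact blk_free hjm (hs2 j hjm) hjM hbig hBscard
      set pick : ℕ → X m := fun j =>
        if h : ∃ x, x ∈ Blk m s j ∧ x ∉ M ∧ x ∉ Bs then h.choose else ctr m with hpickdef
      have hpick : ∀ j ∈ Tgt, pick j ∈ Blk m s j ∧ pick j ∉ M ∧ pick j ∉ Bs := by
        intro j hj
        have hex := hfree j hj
        simp only [hpickdef, dif_pos hex]
        exact hex.choose_spec
      refine ⟨↑(Tgt.image pick), Finset.finite_toSet _, ?_, ?_, ?_⟩
      · rw [Set.ncard_coe_finset]
        calc (Tgt.image pick).card ≤ Tgt.card := Finset.card_image_le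
          _ ≤ b := by rw [hT3]; exact min_le_left _ _
      · rw [Set.disjoint_left]
        intro x hx
        obtain ⟨j, hj, rfl⟩ := Finset.mem_image.mp (Finset.mem_coe.mp hx)
        rintro (hxM | hxBs)
        · exact (hpick j hj).2.1 hxM
        · exact (hpick j hj).2.2 hxBs
      · intro T hTfin hTcard hTdis
        set S : Set (X m) := ↑(Tgt.image pick) with hSdef
        have huncov_new : uncov m s (M ∪ S) = uncov m s M \ Tgt := by
          ext j
          rw [Finset.mem_sdiff, mem_uncov, mem_uncov]
          constructor
          · rintro ⟨hjm, hjMS⟩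
            have hjM : (↑(Blk m s j) : Set (X m)) ∩ M = ∅ := by
              apply Set.eq_empty_of_forall_notMem
              rintro x ⟨hx1, hx2⟩
              exact Set.eq_empty_iff_forall_notMem.mp hjMS x ⟨hx1, Or.inl hx2⟩
            refine ⟨⟨hjm, hjM⟩, fun hjTgt => ?_⟩
            have hp := hpick j hjTgt
            have : pick j ∈ (↑(Blk m s j) : Set (X m)) ∩ (M ∪ S) :=
              ⟨hp.1, Or.inr (Finset.mem_coe.mpr (Finset.mem_image_of_mem pick hjTgt))⟩
            rw [hjMS] at this
            exact this
          · rintro ⟨⟨hjm, hjM⟩, hjTgt⟩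
            refine ⟨hjm, Set.eq_empty_of_forall_notMem ?_⟩
            rintro x ⟨hx1, hx2 | hx3⟩
            · exact Set.eq_empty_iff_forall_notMem.mp hjM x ⟨hx1, hx2⟩
            · obtain ⟨j', hj', rfl⟩ := Finset.mem_image.mp (Finset.mem_coe.mp hx3)
              have hp := hpick j' hj'
              have hne : j ≠ j' := fun h => hjTgt (h ▸ hj')
              exact blk_disjoint hjm (hTgt_range j' hj') (hs2 j hjm)
                (hs2 j' (hTgt_range j' hj')) hne hx1 hp.1
        have hnotA : ∀ j, j ∈ uncov m s (M ∪ S) →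
            (↑(Blk m s j) : Set (X m)) ∩ Bs = ∅ := by
          intro j hj
          rw [huncov_new, Finset.mem_sdiff] at hj
          have hjA : j ∉ A := fun h => hj.2 (hT1 h)
          by_contra hne
          exact hjA (Finset.mem_filter.mpr ⟨hj.1, Set.nonempty_iff_ne_empty.mpr hne⟩)
        refine ih (M ∪ S) (Bs ∪ T) ⟨Set.mem_union_left _ hctr, ?_, ?_⟩ ?_
        · intro j hj
          have hjold : j ∈ uncov m s M := by
            rw [huncov_new, Finset.mem_sdiff] at hj
            exact hj.1
          refine ⟨(hc1 j hjold).1, ?_⟩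
          have h0 := hnotA j hj
          have : (↑(Blk m s j) : Set (X m)) ∩ (Bs ∪ T) = ↑(Blk m s j) ∩ T := by
            rw [Set.inter_union_distrib_left, h0, Set.empty_union]
          rw [this]
          calc ((↑(Blk m s j) : Set (X m)) ∩ T).ncard
              ≤ T.ncard := Set.ncard_le_ncard Set.inter_subset_right hTfin
            _ ≤ b := hTcard
        · have hsub2 : (@Finset.filter _
              (fun j => ((↑(Blk m s j) : Set (X m)) ∩ (Bs ∪ T)).Nonempty)
              (Classical.decPred _) (uncov m s (M ∪ S))) ⊆
            (@Finset.filter _ (fun j => ((↑(Blk m s j) : Set (X m)) ∩ T).Nonempty)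
              (Classical.decPred _) (uncov m s (M ∪ S))) := by
            intro j hj
            rw [Finset.mem_filter] at hj ⊢
            refine ⟨hj.1, ?_⟩
            obtain ⟨x, hx1, hx2 | hx3⟩ := hj.2
            · exact absurd (Set.eq_empty_iff_forall_notMem.mp (hnotA j hj.1) x ⟨hx1, hx2⟩)
                not_false
            · exact ⟨x, hx1, hx3⟩
          calc _ ≤ _ := Finset.card_le_card hsub2
            _ ≤ T.ncard := touch_card hs2 _ (uncov_subset _ _ _) T hTfin
            _ ≤ b := hTcard
        · rw [huncov_new, Finset.card_sdiff_of_subset hT2, hT3]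
          have hpos : 0 < (uncov m s M).card :=
            Finset.card_pos.mpr (Finset.nonempty_of_ne_empty hU0)
          omega

/-- Maker wins when fewer than `b` blocks have size at most `b`. -/
lemma maker {m : ℕ} {s : ℕ → ℕ} (hs1 : ∀ j, j < m → 0 < s j)
    (hs2 : ∀ j, j < m → s j ≤ m) {b : ℕ} (hb : 0 < b)
    (hN : ((Finset.range m).filter (fun j => s j ≤ b)).card < b) :
    mbWin b b (Fam m s) (m + 2) ∅ ∅ := by
  classical
  rw [show m + 2 = (m + 1) + 1 from rfl, mbWin_succ]
  right
  set SB := (Finset.range m).filter (fun j => s j ≤ b) with hSB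
  set S₀ : Set (X m) := insert (ctr m) ↑(SB.image (fun j => vv m j 0)) with hS0
  have hS0card : S₀.ncard ≤ b := by
    calc S₀.ncard ≤ (↑(SB.image (fun j => vv m j 0)) : Set (X m)).ncard + 1 :=
          Set.ncard_insert_le _ _
      _ ≤ SB.card + 1 := by
          rw [Set.ncard_coe_finset]
          exact Nat.add_le_add_right Finset.card_image_le 1
      _ ≤ b := by omega
  refine ⟨S₀, Set.toFinite _, hS0card, by simp, ?_⟩
  intro T hTfin hTcard hTdis
  rw [Set.empty_union, Set.empty_union]
  have hcov : ∀ j, j < m → s j ≤ b → vv m j 0 ∈ S₀ := by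
    intro j hj hsj
    exact Set.mem_insert_iff.mpr (Or.inr (Finset.mem_coe.mpr
      (Finset.mem_image_of_mem _ (Finset.mem_filter.mpr ⟨Finset.mem_range.mpr hj, hsj⟩))))
  have hbig : ∀ j, j ∈ uncov m s S₀ → b + 1 ≤ s j := by
    intro j hj
    obtain ⟨hjm, hjS⟩ := mem_uncov.mp hj
    by_contra hle
    push_neg at hle
    have h1 : vv m j 0 ∈ Blk m s j := mem_Blk.mpr ⟨0, hs1 j hjm, rfl⟩
    have h2 : vv m j 0 ∈ S₀ := hcov j hjm (by omega)
    exact Set.eq_empty_iff_forall_notMem.mp hjS _ ⟨h1, h2⟩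
  refine maker_step hs1 hs2 hb (m + 1) S₀ T ⟨Set.mem_insert _ _, ?_, ?_⟩ ?_
  · intro j hj
    refine ⟨hbig j hj, ?_⟩
    calc ((↑(Blk m s j) : Set (X m)) ∩ T).ncard
        ≤ T.ncard := Set.ncard_le_ncard Set.inter_subset_right hTfin
      _ ≤ b := hTcard
  · calc _ ≤ T.ncard := touch_card hs2 _ (uncov_subset _ _ _) T hTfin
      _ ≤ b := hTcard
  · calc (uncov m s S₀).card ≤ (Finset.range m).card :=
        Finset.card_le_card (uncov_subset _ _ _)
      _ ≤ m + 1 := by rw [Finset.card_range]; omega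

end
end MB

/-- For any finite set `B` of positive integers there is a finite
hypergraph `H = (X, F)` such that Maker, moving first, wins the `(b:b)`
Maker-Breaker game on `H` if and only if `b ∉ B`. -/
theorem maker_breaker_fair_nonmonotone (B : Finset ℕ) (hB : ∀ x ∈ B, 0 < x) :
    ∃ (n : ℕ) (F : Set (Set (Fin n))),
      ∀ b : ℕ, 0 < b → ((∃ t, mbWin b b F t ∅ ∅) ↔ b ∉ B) := by
  classical
  set m : ℕ := if h : B.Nonempty then B.max' h else 0 with hm
  set s : ℕ → ℕ := fun j => sInf {q | q ∈ B ∧ j < q} with hsdef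
  have hmem : ∀ q ∈ B, q ≤ m := by
    intro q hq
    rw [hm, dif_pos ⟨q, hq⟩]
    exact B.le_max' q hq
  have hmmem : ∀ j, j < m → m ∈ B := by
    intro j hj
    by_cases h : B.Nonempty
    · rw [hm, dif_pos h]; exact B.max'_mem h
    · rw [hm, dif_neg h] at hj; omega
  have hSne : ∀ j, j < m → ({q | q ∈ B ∧ j < q} : Set ℕ).Nonempty := by
    intro j hj
    exact ⟨m, hmmem j hj, hj⟩
  have hs_mem : ∀ j, j < m → s j ∈ B ∧ j < s j := fun j hj => Nat.sInf_mem (hSne j hj)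
  have hs_le : ∀ j, j < m → ∀ q ∈ B, j < q → s j ≤ q := fun j _ q hq hlt =>
    Nat.sInf_le ⟨hq, hlt⟩
  have hs1 : ∀ j, j < m → 0 < s j := fun j hj =>
    lt_of_le_of_lt (Nat.zero_le j) (hs_mem j hj).2
  have hs2 : ∀ j, j < m → s j ≤ m := fun j hj => hmem _ (hs_mem j hj).1
  refine ⟨m*m+1, MB.Fam m s, ?_⟩
  intro b hb
  constructor
  · rintro ⟨t, ht⟩ hbB
    have hNge : b ≤ ((Finset.range m).filter (fun j => s j ≤ b)).card := by
      have hsub : Finset.range b ⊆ (Finset.range m).filter (fun j => s j ≤ b) := by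
        intro j hj
        rw [Finset.mem_range] at hj
        have hjm : j < m := lt_of_lt_of_le hj (hmem b hbB)
        exact Finset.mem_filter.mpr ⟨Finset.mem_range.mpr hjm, hs_le j hjm b hbB hj⟩
      calc b = (Finset.range b).card := (Finset.card_range b).symm
        _ ≤ _ := Finset.card_le_card hsub
    exact MB.breaker m s hs2 b hb hNge t ht
  · intro hbB
    refine ⟨m + 2, MB.maker hs1 hs2 hb ?_⟩
    have hsub : (Finset.range m).filter (fun j => s j ≤ b) ⊆ Finset.range (b-1) := by
      intro j hj
      rw [Finset.mem_filter, Finset.mem_range] at hj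
      obtain ⟨hjm, hsjb⟩ := hj
      have h1 := (hs_mem j hjm).1
      have h2 := (hs_mem j hjm).2
      have hne : s j ≠ b := fun h => hbB (h ▸ h1)
      rw [Finset.mem_range]
      omega
    calc _ ≤ (Finset.range (b-1)).card := Finset.card_le_card hsub
      _ < b := by rw [Finset.card_range]; omega
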